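/- Let a camera move with C¹ rotation R(t) ∈ SO(3) and translation 𝑻(t), R(0) = I, 𝑻(0) = 0, observing a fixed 3D point Γʷ (constant in t) with camera coordinates Γ(t) = R(t)Γʷ + 𝑻(t), depth ρ = ⟨e₃, Γ⟩ > 0, and image point γ = Γ/ρ. With Ω̂ = R′(0)R(0)ᵀ with axial vector Ω and V = 𝑻′(0), the differential epipolar (essential) constraint holds at t = 0: ⟨γ_t, V × γ⟩ + ⟨γ, Ω × (V × γ)⟩ = 0. In particular the image position and velocity of a fixed point constrain the differential camera motion (V, Ω) independently of the unknown depth ρ. -/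

import Mathlib

open scoped RealInnerProductSpace

attribute [local instance] Matrix.frobeniusNormedAddCommGroup Matrix.frobeniusNormedSpace

noncomputable section

/-- ℝ³ with the Euclidean inner product. -/
abbrev V3 : Type := EuclideanSpace ℝ (Fin 3)

/-- The third standard basis vector e₃ = (0,0,1). -/
def e3 : V3 := WithLp.toLp 2 ![0, 0, 1]

/-- The cross product on ℝ³. -/
def cross3 (u v : V3) : V3 :=
  WithLp.toLp 2 ![u 1 * v 2 - u 2 * v 1, u 2 * v 0 - u 0 * v 2, u 0 * v 1 - u 1 * v 0]

/-- Matrix–vector multiplication, valued in ℝ³ with the Euclidean structure. -/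
def mulV (A : Matrix (Fin 3) (Fin 3) ℝ) (v : V3) : V3 := WithLp.toLp 2 (A.mulVec v)

/-- the differential epipolar (essential) constraint for the image
of a fixed 3D point under differential camera motion `(V, Ω)`: at `t = 0`,
`⟨γ_t, V × γ⟩ + ⟨γ, Ω × (V × γ)⟩ = 0`. -/
theorem differential_epipolar_constraint
    (R R' : ℝ → Matrix (Fin 3) (Fin 3) ℝ)
    (Ω : V3)
    (Tr Tr' : ℝ → V3)
    (Γw : V3)
    (Γ : ℝ → V3) (ρ : ℝ → ℝ) (γ γ' : ℝ → V3)
    -- camera motion: R(t) ∈ SO(3), C¹, with R(0) = I, 𝑻(0) = 0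
    (hRorth : ∀ t, R t * (R t).transpose = 1)
    (hRdet : ∀ t, (R t).det = 1)
    (hR' : ∀ t, HasDerivAt R (R' t) t)
    (hR0 : R 0 = 1)
    -- Ω is the axial vector of the skew-symmetric Ω̂ = R′(0)R(0)ᵀ
    (hΩ : ∀ v : V3, mulV (R' 0 * (R 0).transpose) v = cross3 Ω v)
    (hTr' : ∀ t, HasDerivAt Tr (Tr' t) t)
    (hTr0 : Tr 0 = 0)
    -- fixed point with camera coordinates, depth and image
    (hΓ : ∀ t, Γ t = mulV (R t) Γw + Tr t)
    (hρ : ∀ t, ρ t = ⟪e3, Γ t⟫)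
    (hρpos : ∀ t, 0 < ρ t)
    (hγ : ∀ t, γ t = (ρ t)⁻¹ • Γ t)
    (hγ' : ∀ t, HasDerivAt γ (γ' t) t) :
    -- conclusion at t = 0, with V = 𝑻′(0)
    ⟪γ' 0, cross3 (Tr' 0) (γ 0)⟫ + ⟪γ 0, cross3 Ω (cross3 (Tr' 0) (γ 0))⟫ = 0 := by
  have hΓfun : Γ = fun t => mulV (R t) Γw + Tr t := funext hΓ
  have hρfun : ρ = fun t => ⟪e3, Γ t⟫ := funext hρ
  have hγfun : γ = fun t => (ρ t)⁻¹ • Γ t := funext hγ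
  -- derivative of Γ at 0
  set L : Matrix (Fin 3) (Fin 3) ℝ →ₗ[ℝ] V3 :=
    { toFun := fun A => mulV A Γw
      map_add' := fun A B => by simp [mulV, Matrix.add_mulVec]
      map_smul' := fun a A => by simp [mulV, Matrix.smul_mulVec] } with hL
  set Γ'0 : V3 := mulV (R' 0) Γw + Tr' 0 with hΓ'0
  have hΓd : HasDerivAt Γ Γ'0 0 := by
    rw [hΓfun]
    exact ((L.toContinuousLinearMap.hasFDerivAt.comp_hasDerivAt 0 (hR' 0))).add (hTr' 0)
  -- derivative of ρ at 0
  have hρd : HasDerivAt ρ ⟪e3, Γ'0⟫ 0 := by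
    rw [hρfun]
    exact ((innerSL ℝ e3).hasFDerivAt.comp_hasDerivAt 0 hΓd)
  -- derivative of γ at 0
  have hρ0 : ρ 0 ≠ 0 := (hρpos 0).ne'
  have hγd : HasDerivAt γ
      ((ρ 0)⁻¹ • Γ'0 + (-⟪e3, Γ'0⟫ / (ρ 0) ^ 2) • Γ 0) 0 := by
    rw [hγfun]
    exact (hρd.inv hρ0).smul hΓd
  have hγ'0 : γ' 0 = (ρ 0)⁻¹ • Γ'0 + (-⟪e3, Γ'0⟫ / (ρ 0) ^ 2) • Γ 0 :=
    (hγ' 0).unique hγd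
  -- values at 0
  have hΓ0 : Γ 0 = Γw := by
    rw [hΓ 0, hR0, hTr0, add_zero]; simp [mulV]
  have hmul : mulV (R' 0) Γw = cross3 Ω Γw := by
    have := hΩ Γw
    rwa [hR0, Matrix.transpose_one, mul_one] at this
  rw [hγ'0, hγ 0, hΓ0, hΓ'0, hmul]
  simp only [cross3, PiLp.inner_apply, Fin.sum_univ_three, PiLp.add_apply, PiLp.smul_apply,
    smul_eq_mul, RCLike.inner_apply, conj_trivial, Matrix.cons_val_zero, Matrix.cons_val_one,
    Matrix.head_cons, Matrix.cons_val_two, Matrix.tail_cons, PiLp.toLp_apply]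
  ring
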